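/- Let τ ∈ (0,1) and let X be a square-integrable real random variable with τ-expectile μ_τ(X) and let m ∈ ℝ with m ≠ μ_τ(X). Then E[R_τ(X − μ_τ(X))] < E[R_τ(X − m)]; i.e., the expectile is the strict minimizer of the expected asymmetric quadratic loss. -/

import Mathlib

open MeasureTheory

noncomputable def Rloss (τ u : ℝ) : ℝ :=
  τ * (max u 0) ^ 2 + (1 - τ) * (max (-u) 0) ^ 2

def IsExpectile {Ω : Type*} [MeasurableSpace Ω] (μ : Measure Ω) (τ : ℝ)
    (X : Ω → ℝ) (m : ℝ) : Prop :=
  ∀ m' : ℝ, ∫ ω, Rloss τ (X ω - m) ∂μ ≤ ∫ ω, Rloss τ (X ω - m') ∂μ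

lemma rloss_sq (τ u : ℝ) : Rloss τ u = τ * u ^ 2 + (1 - 2 * τ) * (max (-u) 0) ^ 2 := by
  unfold Rloss
  rcases le_or_gt u 0 with h | h
  · rw [max_eq_right h, max_eq_left (by linarith)]; ring
  · rw [max_eq_left h.le, max_eq_right (by linarith)]; ring

lemma negpart_sq_midpoint (u v : ℝ) :
    (max (-((u + v) / 2)) 0) ^ 2 ≤ ((max (-u) 0) ^ 2 + (max (-v) 0) ^ 2) / 2 := by
  have h1 : -((u + v) / 2) ≤ (max (-u) 0 + max (-v) 0) / 2 := by
    have := le_max_left (-u) 0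
    have := le_max_left (-v) 0
    linarith
  have h2 : max (-((u + v) / 2)) 0 ≤ (max (-u) 0 + max (-v) 0) / 2 := by
    apply max_le h1
    have := le_max_right (-u) 0
    have := le_max_right (-v) 0
    linarith
  have h3 : (max (-((u + v) / 2)) 0) ^ 2 ≤ ((max (-u) 0 + max (-v) 0) / 2) ^ 2 := by
    apply pow_le_pow_left₀ (le_max_right _ _) h2
  nlinarith [sq_nonneg (max (-u) 0 - max (-v) 0)]

lemma pospart_sq_midpoint (u v : ℝ) :
    (max ((u + v) / 2) 0) ^ 2 ≤ ((max u 0) ^ 2 + (max v 0) ^ 2) / 2 := by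
  have h := negpart_sq_midpoint (-u) (-v)
  have e : -((-u + -v) / 2) = (u + v) / 2 := by ring
  rw [e, neg_neg, neg_neg] at h
  exact h

lemma rloss_midpoint (τ : ℝ) (hτ0 : 0 < τ) (hτ1 : τ < 1) (u v : ℝ) :
    Rloss τ ((u + v) / 2) + min τ (1 - τ) * ((u - v) / 2) ^ 2
      ≤ (Rloss τ u + Rloss τ v) / 2 := by
  rcases le_total τ (1 - τ) with h | h
  · rw [min_eq_left h]
    rw [rloss_sq τ ((u+v)/2), rloss_sq τ u, rloss_sq τ v]
    have hn := negpart_sq_midpoint u v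
    nlinarith [sq_nonneg (u - v)]
  · rw [min_eq_right h]
    have key : ∀ w, Rloss τ w = (1 - τ) * w ^ 2 + (2 * τ - 1) * (max w 0) ^ 2 := by
      intro w
      unfold Rloss
      rcases le_or_gt w 0 with hw | hw
      · rw [max_eq_right hw, max_eq_left (by linarith)]; ring
      · rw [max_eq_left hw.le, max_eq_right (by linarith)]; ring
    rw [key, key, key]
    have hp := pospart_sq_midpoint u v
    nlinarith [sq_nonneg (u - v)]

theorem stmt18 {Ω : Type*} [MeasurableSpace Ω] (μ : Measure Ω) [IsProbabilityMeasure μ]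
    (X : Ω → ℝ) (hX : Measurable X) (hX2 : Integrable (fun ω => (X ω) ^ 2) μ)
    (τ : ℝ) (hτ : τ ∈ Set.Ioo (0:ℝ) 1)
    (μτ : ℝ) (hμτ : IsExpectile μ τ X μτ)
    (m : ℝ) (hm : m ≠ μτ) :
    ∫ ω, Rloss τ (X ω - μτ) ∂μ < ∫ ω, Rloss τ (X ω - m) ∂μ := by
  obtain ⟨hτ0, hτ1⟩ := hτ
  set c : ℝ := min τ (1 - τ) with hc
  have hcpos : 0 < c := lt_min hτ0 (by linarith)
  -- integrability of X
  have hXint : Integrable X μ := by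
    have : Integrable (fun ω => (1 + (X ω) ^ 2) / 2) μ :=
      (((integrable_const (1:ℝ)).add hX2).div_const 2)
    refine this.mono (hX.aestronglyMeasurable) (ae_of_all _ fun ω => ?_)
    have := sq_nonneg (|X ω| - 1)
    rw [Real.norm_eq_abs, Real.norm_eq_abs]
    rw [abs_of_nonneg (by positivity : (0:ℝ) ≤ (1 + (X ω)^2)/2)]
    nlinarith [sq_abs (X ω), abs_nonneg (X ω)]
  have hsub : ∀ a : ℝ, Integrable (fun ω => (X ω - a) ^ 2) μ := by
    intro a
    have : (fun ω => (X ω - a) ^ 2) = fun ω => (X ω) ^ 2 + (-2 * a) * X ω + a ^ 2 := by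
      funext ω; ring
    rw [this]
    exact (hX2.add (hXint.const_mul _)).add (integrable_const _)
  have hRint : ∀ a : ℝ, Integrable (fun ω => Rloss τ (X ω - a)) μ := by
    intro a
    refine (hsub a).mono ?_ (ae_of_all _ fun ω => ?_)
    · apply Measurable.aestronglyMeasurable
      unfold Rloss
      exact ((measurable_const.mul (((hX.sub measurable_const).max measurable_const).pow measurable_const)).add
        (measurable_const.mul ((((hX.sub measurable_const).neg).max measurable_const).pow measurable_const)))
    · set u := X ω - a
      rw [Real.norm_eq_abs, Real.norm_eq_abs]
      have hsplit : (max u 0) ^ 2 + (max (-u) 0) ^ 2 = u ^ 2 := by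
        rcases le_or_gt u 0 with h | h
        · rw [max_eq_right h, max_eq_left (by linarith)]; ring
        · rw [max_eq_left h.le, max_eq_right (by linarith)]; ring
      have h1 : (0:ℝ) ≤ Rloss τ u := by
        unfold Rloss
        have := sq_nonneg (max u 0)
        have := sq_nonneg (max (-u) 0)
        nlinarith
      have h2 : Rloss τ u ≤ u ^ 2 := by
        unfold Rloss
        nlinarith [sq_nonneg (max u 0), sq_nonneg (max (-u) 0)]
      rw [abs_of_nonneg h1, abs_of_nonneg (sq_nonneg u)]
      exact h2
  set mid : ℝ := (μτ + m) / 2 with hmid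
  have hpt : ∀ ω, Rloss τ (X ω - mid) + c * ((m - μτ) / 2) ^ 2
      ≤ (Rloss τ (X ω - μτ) + Rloss τ (X ω - m)) / 2 := by
    intro ω
    have := rloss_midpoint τ hτ0 hτ1 (X ω - μτ) (X ω - m)
    have e1 : (X ω - μτ + (X ω - m)) / 2 = X ω - mid := by rw [hmid]; ring
    have e2 : (X ω - μτ - (X ω - m)) / 2 = (m - μτ) / 2 := by ring
    rw [e1, e2] at this
    exact this
  -- integrate
  have hint1 : ∫ ω, (Rloss τ (X ω - mid) + c * ((m - μτ) / 2) ^ 2) ∂μ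
      ≤ ∫ ω, (Rloss τ (X ω - μτ) + Rloss τ (X ω - m)) / 2 ∂μ := by
    refine integral_mono ?_ ?_ hpt
    · exact (hRint mid).add (integrable_const _)
    · exact ((hRint μτ).add (hRint m)).div_const 2
  rw [integral_add (hRint mid) (integrable_const _), integral_const] at hint1
  rw [integral_div, integral_add (hRint μτ) (hRint m)] at hint1
  simp only [measure_univ, probReal_univ, ENNReal.toReal_one, smul_eq_mul, one_mul] at hint1
  have hmin := hμτ mid
  have hδ : 0 < c * ((m - μτ) / 2) ^ 2 := by
    apply mul_pos hcpos
    have hne : (m - μτ) / 2 ≠ 0 := by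
      intro h; apply hm; field_simp at h; linarith
    exact pow_two_pos_of_ne_zero hne
  linarith
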